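/- Let s₀ > 0, h ∈ C¹, and suppose v ∈ C²([0,ℓ]) satisfies v''(x) + s₀² h(s₀x) v(x) = 0 on [0,ℓ] with v(0) = v(ℓ) = 0. Then ∫₀^ℓ [2h(s₀x) + s₀x h'(s₀x)] v(x)² dx = (ℓ/s₀²) v'(ℓ)². -/

import Mathlib

open intervalIntegral

/-- If `v'' + s₀² h(s₀x) v = 0` on `[0,ℓ]` with `v(0) = v(ℓ) = 0`,
then `∫₀^ℓ [2h(s₀x) + s₀ x h'(s₀x)] v² dx = (ℓ/s₀²) v'(ℓ)²`. -/
theorem stmt2 (ℓ s₀ : ℝ) (hs : 0 < s₀) (hℓ : 0 ≤ ℓ)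
    (h h' v v' v'' : ℝ → ℝ)
    (hh : ∀ x, HasDerivAt h (h' x) x)
    (hh' : Continuous h')
    (hv : ∀ x, HasDerivAt v (v' x) x)
    (hv' : ∀ x, HasDerivAt v' (v'' x) x)
    (hv'' : Continuous v'')
    (hode : ∀ x ∈ Set.Icc (0:ℝ) ℓ, v'' x + s₀^2 * h (s₀ * x) * v x = 0)
    (hv0 : v 0 = 0) (hvℓ : v ℓ = 0) :
    ∫ x in (0:ℝ)..ℓ, (2 * h (s₀ * x) + s₀ * x * h' (s₀ * x)) * (v x)^2
      = (ℓ / s₀^2) * (v' ℓ)^2 := by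
  have hcv : Continuous v := continuous_iff_continuousAt.2 fun x => (hv x).continuousAt
  have hcv' : Continuous v' := continuous_iff_continuousAt.2 fun x => (hv' x).continuousAt
  have hch : Continuous h := continuous_iff_continuousAt.2 fun x => (hh x).continuousAt
  have hs2 : (s₀:ℝ)^2 ≠ 0 := by positivity
  set F : ℝ → ℝ := fun x =>
    x / s₀^2 * (v' x)^2 + x * (v x)^2 * h (s₀ * x) - 1 / s₀^2 * (v x * v' x) with hF
  have key : ∀ x ∈ Set.uIcc (0:ℝ) ℓ,
      HasDerivAt F ((2 * h (s₀ * x) + s₀ * x * h' (s₀ * x)) * (v x)^2) x := by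
    intro x hx
    rw [Set.uIcc_of_le hℓ] at hx
    have hhs : HasDerivAt (fun x => h (s₀ * x)) (h' (s₀ * x) * s₀) x := by
      exact ((hh (s₀ * x)).comp x ((hasDerivAt_id x).const_mul s₀)).congr_deriv (by simp)
    have d1 : HasDerivAt (fun x => x / s₀^2 * (v' x)^2)
        (1 / s₀^2 * (v' x)^2 + x / s₀^2 * (2 * v' x * v'' x)) x := by
      have := ((hasDerivAt_id x).div_const (s₀^2)).mul ((hv' x).pow 2)
      exact this.congr_deriv (by simp)
    have d2 : HasDerivAt (fun x => x * (v x)^2 * h (s₀ * x))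
        (((v x)^2 + x * (2 * v x * v' x)) * h (s₀ * x)
          + x * (v x)^2 * (h' (s₀ * x) * s₀)) x := by
      have := ((hasDerivAt_id x).mul ((hv x).pow 2)).mul hhs
      exact this.congr_deriv (by simp)
    have d3 : HasDerivAt (fun x => 1 / s₀^2 * (v x * v' x))
        (1 / s₀^2 * (v' x * v' x + v x * v'' x)) x :=
      ((hv x).mul (hv' x)).const_mul _
    have := (d1.add d2).sub d3
    refine this.congr_deriv ?_
    have hode' : v'' x = -(s₀^2 * h (s₀ * x) * v x) := by
      have := hode x hx; linarith
    rw [hode']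
    field_simp
    ring
  have hFint : IntervalIntegrable
      (fun x => (2 * h (s₀ * x) + s₀ * x * h' (s₀ * x)) * (v x)^2)
      MeasureTheory.volume 0 ℓ := by
    apply Continuous.intervalIntegrable
    continuity
  have := intervalIntegral.integral_eq_sub_of_hasDerivAt key hFint
  rw [this, hF]
  simp [hv0, hvℓ]
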